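/- Let Z be a type, d ≥ 1, and ℓ : ℝ^d → Z → Z → ℝ a pairwise loss such that for every z, z' ∈ Z the map w ↦ ℓ(w, z, z') is convex, differentiable with β-Lipschitz gradient (β > 0), and ‖∇ℓ(w, z, z')‖ ≤ L for all w. Let S, S' : Fin n → Z be neighboring samples (n ≥ 2), let step sizes satisfy 0 ≤ α_t ≤ 2/β for all t, and for each path ξ : Fin T → Fin n let w_T(ξ) and w'_T(ξ) denote the SGD iterates for pairwise learning at step T based on S and S' respectively. Then, under the random selection rule, for all z, z' ∈ Z: (1/n^T)·Σ_{ξ : Fin T → Fin n} |ℓ(w_T(ξ), z, z') − ℓ(w'_T(ξ), z, z')| ≤ (4L²/n)·Σ_{t=1}^{T−1} α_t. -/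

import Mathlib

open InnerProductSpace in
private lemma aux_hasDerivAt_line {E : Type*} [NormedAddCommGroup E] [InnerProductSpace ℝ E]
    [CompleteSpace E] {f : E → ℝ} {g : E → E} (hdiff : ∀ v, HasGradientAt f (g v) v)
    (x d : E) (t : ℝ) :
    HasDerivAt (fun t : ℝ => f (x + t • d)) (inner ℝ (g (x + t • d)) d : ℝ) t := by
  have h1 : HasDerivAt (fun t : ℝ => x + t • d) d t := by
    simpa using ((hasDerivAt_id t).smul_const d).const_add x
  have h2 : HasFDerivAt f (toDual ℝ E (g (x + t • d))) (x + t • d) :=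
    hasGradientAt_iff_hasFDerivAt.mp (hdiff _)
  exact (h2.comp_hasDerivAt t h1).congr_deriv (by simp)

private lemma aux_first_order {E : Type*} [NormedAddCommGroup E] [InnerProductSpace ℝ E]
    [CompleteSpace E] {f : E → ℝ} {g : E → E} (hconv : ConvexOn ℝ Set.univ f)
    (hdiff : ∀ v, HasGradientAt f (g v) v) (x y : E) :
    f x + (inner ℝ (g x) (y - x) : ℝ) ≤ f y := by
  have hk : ConvexOn ℝ Set.univ (fun t : ℝ => f (x + t • (y - x))) := by
    have h1 := hconv.comp_affineMap (AffineMap.lineMap x y)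
    have h2 : (fun t : ℝ => f (x + t • (y - x))) = (f ∘ (AffineMap.lineMap x y)) := by
      funext t
      simp [AffineMap.lineMap_apply, add_comm]
    rw [h2]
    simpa using h1
  have hder := aux_hasDerivAt_line hdiff x (y - x) 0
  have hd0 : HasDerivAt (fun t : ℝ => f (x + t • (y - x))) (inner ℝ (g x) (y - x) : ℝ) 0 := by
    simpa using hder
  have hs := hk.le_slope_of_hasDerivAt (Set.mem_univ (0:ℝ)) (Set.mem_univ 1) one_pos hd0
  simp [slope_def_field] at hs
  linarith

private lemma aux_descent {E : Type*} [NormedAddCommGroup E] [InnerProductSpace ℝ E]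
    [CompleteSpace E] {f : E → ℝ} {g : E → E} {β : ℝ} (hβ : 0 < β)
    (hdiff : ∀ v, HasGradientAt f (g v) v)
    (hsm : ∀ u v, ‖g u - g v‖ ≤ β * ‖u - v‖) (x y : E) :
    f y ≤ f x + (inner ℝ (g x) (y - x) : ℝ) + β / 2 * ‖y - x‖ ^ 2 := by
  set d := y - x with hd
  set ψ : ℝ → ℝ := fun t => f (x + t • d) - t * (inner ℝ (g x) d : ℝ) - β / 2 * t ^ 2 * ‖d‖ ^ 2
    with hψ
  have hder : ∀ t : ℝ, HasDerivAt ψ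
      ((inner ℝ (g (x + t • d)) d : ℝ) - (inner ℝ (g x) d : ℝ) - β * t * ‖d‖ ^ 2) t := by
    intro t
    have h1 := aux_hasDerivAt_line hdiff x d t
    have h2 : HasDerivAt (fun t : ℝ => t * (inner ℝ (g x) d : ℝ)) (inner ℝ (g x) d : ℝ) t := by
      simpa using (hasDerivAt_id t).mul_const (inner ℝ (g x) d : ℝ)
    have h3 : HasDerivAt (fun t : ℝ => β / 2 * t ^ 2 * ‖d‖ ^ 2) (β * t * ‖d‖ ^ 2) t := by
      have := ((hasDerivAt_pow 2 t).const_mul (β / 2)).mul_const (‖d‖ ^ 2)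
      refine this.congr_deriv ?_
      ring
    exact (h1.sub h2).sub h3
  have hanti : AntitoneOn ψ (Set.Icc (0:ℝ) 1) := by
    apply antitoneOn_of_deriv_nonpos (convex_Icc 0 1)
    · exact (Differentiable.continuous (fun t => (hder t).differentiableAt)).continuousOn
    · exact fun t _ => ((hder t).differentiableAt).differentiableWithinAt
    · intro t ht
      rw [interior_Icc] at ht
      rw [(hder t).deriv]
      have h1 : (inner ℝ (g (x + t • d) - g x) d : ℝ) ≤ ‖g (x + t • d) - g x‖ * ‖d‖ :=
        real_inner_le_norm _ _
      have h2 : ‖g (x + t • d) - g x‖ ≤ β * (t * ‖d‖) := by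
        have := hsm (x + t • d) x
        simpa [norm_smul, abs_of_pos ht.1] using this
      have h3 : (inner ℝ (g (x + t • d) - g x) d : ℝ)
          = (inner ℝ (g (x + t • d)) d : ℝ) - (inner ℝ (g x) d : ℝ) := inner_sub_left _ _ _
      nlinarith [norm_nonneg d, norm_nonneg (g (x + t • d) - g x), ht.1.le]
  have h01 := hanti (Set.left_mem_Icc.mpr zero_le_one) (Set.right_mem_Icc.mpr zero_le_one)
    zero_le_one
  have hψ0 : ψ 0 = f x := by simp [hψ]
  have hψ1 : ψ 1 = f y - (inner ℝ (g x) d : ℝ) - β / 2 * ‖d‖ ^ 2 := by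
    simp [hψ, hd]
  rw [hψ0, hψ1] at h01
  linarith

private lemma aux_coco {E : Type*} [NormedAddCommGroup E] [InnerProductSpace ℝ E]
    [CompleteSpace E] {f : E → ℝ} {g : E → E} {β : ℝ} (hβ : 0 < β)
    (hconv : ConvexOn ℝ Set.univ f) (hdiff : ∀ v, HasGradientAt f (g v) v)
    (hsm : ∀ u v, ‖g u - g v‖ ≤ β * ‖u - v‖) (u v : E) :
    (1 / β) * ‖g u - g v‖ ^ 2 ≤ (inner ℝ (g u - g v) (u - v) : ℝ) := by
  have hβ0 : β ≠ 0 := ne_of_gt hβ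
  have key : ∀ a b : E,
      f a + (inner ℝ (g a) (b - a) : ℝ) + 1 / (2 * β) * ‖g b - g a‖ ^ 2 ≤ f b := by
    intro a b
    have h1 := aux_first_order hconv hdiff a (b - (1 / β) • (g b - g a))
    have h2 := aux_descent hβ hdiff hsm b (b - (1 / β) • (g b - g a))
    have e1 : (b - (1 / β) • (g b - g a)) - b = -((1 / β) • (g b - g a)) := by abel
    have e2 : (b - (1 / β) • (g b - g a)) - a = (b - a) - (1 / β) • (g b - g a) := by abel
    rw [e1] at h2
    rw [e2] at h1
    have i1 : (inner ℝ (g b) (-((1 / β) • (g b - g a))) : ℝ)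
        = -((1 / β) * inner ℝ (g b) (g b - g a)) := by
      rw [inner_neg_right, real_inner_smul_right]
    have i2 : (inner ℝ (g a) ((b - a) - (1 / β) • (g b - g a)) : ℝ)
        = inner ℝ (g a) (b - a) - (1 / β) * inner ℝ (g a) (g b - g a) := by
      rw [inner_sub_right, real_inner_smul_right]
    have i3 : β / 2 * ‖-((1 / β) • (g b - g a))‖ ^ 2 = 1 / (2 * β) * ‖g b - g a‖ ^ 2 := by
      rw [norm_neg, norm_smul, Real.norm_eq_abs, abs_of_pos (by positivity : (0:ℝ) < 1 / β)]
      field_simp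
    have i4 : (1 / β) * (inner ℝ (g b) (g b - g a) : ℝ)
        - (1 / β) * (inner ℝ (g a) (g b - g a) : ℝ) = (1 / β) * ‖g b - g a‖ ^ 2 := by
      rw [← mul_sub, ← inner_sub_left, real_inner_self_eq_norm_sq]
    have i5 : (1 / β) * ‖g b - g a‖ ^ 2 = 2 * (1 / (2 * β) * ‖g b - g a‖ ^ 2) := by
      field_simp
    rw [i1, i3] at h2
    rw [i2] at h1
    linarith
  have k1 := key u v
  have k2 := key v u
  have e1 : (inner ℝ (g u) (v - u) : ℝ) = -(inner ℝ (g u) (u - v) : ℝ) := by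
    rw [← inner_neg_right]; congr 1; abel
  have e2 : (inner ℝ (g u - g v) (u - v) : ℝ)
      = (inner ℝ (g u) (u - v) : ℝ) - (inner ℝ (g v) (u - v) : ℝ) := inner_sub_left _ _ _
  have e3 : ‖g v - g u‖ = ‖g u - g v‖ := norm_sub_rev _ _
  have e4 : (1 / β) * ‖g u - g v‖ ^ 2 = 2 * (1 / (2 * β) * ‖g u - g v‖ ^ 2) := by
    field_simp
  rw [e3] at k1
  rw [e1] at k1
  linarith

private lemma aux_nonexp {E : Type*} [NormedAddCommGroup E] [InnerProductSpace ℝ E]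
    [CompleteSpace E] {f : E → ℝ} {g : E → E} {β : ℝ} (hβ : 0 < β)
    (hconv : ConvexOn ℝ Set.univ f) (hdiff : ∀ v, HasGradientAt f (g v) v)
    (hsm : ∀ u v, ‖g u - g v‖ ≤ β * ‖u - v‖) {c : ℝ} (hc : 0 ≤ c) (hc2 : c ≤ 2 / β)
    (a b : E) : ‖(a - c • g a) - (b - c • g b)‖ ≤ ‖a - b‖ := by
  have hco := aux_coco hβ hconv hdiff hsm a b
  have hrw : (a - c • g a) - (b - c • g b) = (a - b) - c • (g a - g b) := by module
  rw [hrw]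
  have hsq : ‖(a - b) - c • (g a - g b)‖ ^ 2 ≤ ‖a - b‖ ^ 2 := by
    rw [norm_sub_sq_real, real_inner_smul_right, norm_smul, Real.norm_eq_abs,
      abs_of_nonneg hc]
    have h1 : (inner ℝ (a - b) (g a - g b) : ℝ) = inner ℝ (g a - g b) (a - b) :=
      real_inner_comm _ _
    rw [h1]
    have h2 : c * (1 / β) * ‖g a - g b‖ ^ 2 ≤ c * (inner ℝ (g a - g b) (a - b) : ℝ) := by
      rw [mul_assoc]
      exact mul_le_mul_of_nonneg_left hco hc
    have h4 : c * c ≤ c * (2 / β) := mul_le_mul_of_nonneg_left hc2 hc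
    have h5 := mul_le_mul_of_nonneg_right h4 (sq_nonneg ‖g a - g b‖)
    have h6 : c * (2 / β) * ‖g a - g b‖ ^ 2 = 2 * (c * (1 / β) * ‖g a - g b‖ ^ 2) := by ring
    nlinarith [h2, h5, h6]
  nlinarith [norm_nonneg ((a - b) - c • (g a - g b)), norm_nonneg (a - b)]

open InnerProductSpace in
private lemma aux_lips {E : Type*} [NormedAddCommGroup E] [InnerProductSpace ℝ E]
    [CompleteSpace E] {f : E → ℝ} {g : E → E} (hdiff : ∀ v, HasGradientAt f (g v) v) {L : ℝ}
    (hL : ∀ v, ‖g v‖ ≤ L) (a b : E) : |f a - f b| ≤ L * ‖a - b‖ := by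
  have h := convex_univ.norm_image_sub_le_of_norm_hasFDerivWithin_le
    (f' := fun v => toDual ℝ E (g v))
    (fun v _ => (hasGradientAt_iff_hasFDerivAt.mp (hdiff v)).hasFDerivWithinAt)
    (fun v _ => by simpa using hL v) (Set.mem_univ b) (Set.mem_univ a)
  simpa [Real.norm_eq_abs] using h

private lemma aux_count (n T : ℕ) (hn : 1 ≤ n) (i₀ : Fin n) (p : Fin T) :
    ∑ ξ : Fin T → Fin n, (if ξ p = i₀ then (1:ℝ) else 0) = (n : ℝ) ^ (T - 1) := by
  classical
  rw [← Equiv.sum_comp ((Equiv.funSplitAt p (Fin n)).symm)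
    (fun ξ => if ξ p = i₀ then (1:ℝ) else 0), Fintype.sum_prod_type]
  simp only [Equiv.funSplitAt_symm_apply, dite_eq_ite, if_pos rfl]
  simp [Finset.sum_ite_eq', Finset.card_univ, Fintype.card_fun, Fintype.card_subtype_compl,
    Fintype.card_subtype_eq]

private lemma aux_step_bound {E : Type*} [NormedAddCommGroup E] [InnerProductSpace ℝ E]
    [CompleteSpace E] {Z : Type*}
    (ℓ : E → Z → Z → ℝ) (g : E → Z → Z → E) (L β : ℝ) (hβ : 0 < β)
    (hconv : ∀ z z' : Z, ConvexOn ℝ Set.univ fun u => ℓ u z z')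
    (hdiff : ∀ (v : E) (z z' : Z), HasGradientAt (fun u => ℓ u z z') (g v z z') v)
    (hsmooth : ∀ (z z' : Z) (u v : E), ‖g u z z' - g v z z'‖ ≤ β * ‖u - v‖)
    (hL : ∀ (v : E) (z z' : Z), ‖g v z z'‖ ≤ L)
    {n : ℕ} (S S' : Fin n → Z) (i₀ : Fin n) (hSS' : ∀ i, i ≠ i₀ → S i = S' i)
    {c : ℝ} (hc : 0 ≤ c) (hc2 : c ≤ 2 / β)
    {m : ℕ} (hm : 1 ≤ m) (P : Fin n) (Q : Fin m → Fin n) (a b : E) :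
    ‖(a - (c / (m : ℝ)) • ∑ j : Fin m, g a (S P) (S (Q j)))
      - (b - (c / (m : ℝ)) • ∑ j : Fin m, g b (S' P) (S' (Q j)))‖
      ≤ ‖a - b‖ + (2 * L * c / (m : ℝ)) *
          ∑ j : Fin m, ((if P = i₀ then (1:ℝ) else 0) + (if Q j = i₀ then (1:ℝ) else 0)) := by
  classical
  have hL0 : 0 ≤ L := le_trans (norm_nonneg _) (hL a (S P) (S P))
  have hmne : ((m : ℕ) : ℝ) ≠ 0 := Nat.cast_ne_zero.mpr (by omega)
  have hmpos : (0:ℝ) < (m : ℝ) := by exact_mod_cast Nat.pos_of_ne_zero (by omega)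
  set u : Fin m → E := fun j => g a (S P) (S (Q j)) with hu
  set v : Fin m → E := fun j => g b (S' P) (S' (Q j)) with hv
  have hws : (a - (c / (m : ℝ)) • ∑ j : Fin m, u j) - (b - (c / (m : ℝ)) • ∑ j : Fin m, v j)
      = (m : ℝ)⁻¹ • ∑ j : Fin m, ((a - b) - c • (u j - v j)) := by
    have h1 : ∑ j : Fin m, ((a - b) - c • (u j - v j))
        = (m : ℕ) • (a - b) - c • ((∑ j : Fin m, u j) - ∑ j : Fin m, v j) := by
      rw [Finset.sum_sub_distrib, Finset.sum_const, Finset.card_univ, Fintype.card_fin,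
        ← Finset.smul_sum, Finset.sum_sub_distrib]
    rw [h1, ← Nat.cast_smul_eq_nsmul ℝ, smul_sub ((m:ℝ)⁻¹), smul_smul,
      inv_mul_cancel₀ hmne, one_smul, smul_smul]
    have h2 : (m:ℝ)⁻¹ * c = c / (m:ℝ) := by ring
    rw [h2, smul_sub (c / (m:ℝ))]
    abel
  have hgen : ∀ j : Fin m, ‖(a - b) - c • (u j - v j)‖ ≤ ‖a - b‖ + 2 * L * c := by
    intro j
    calc ‖(a - b) - c • (u j - v j)‖ ≤ ‖a - b‖ + ‖c • (u j - v j)‖ := norm_sub_le _ _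
      _ ≤ ‖a - b‖ + 2 * L * c := by
          rw [norm_smul, Real.norm_eq_abs, abs_of_nonneg hc]
          have h1 : ‖u j - v j‖ ≤ ‖u j‖ + ‖v j‖ := norm_sub_le _ _
          have h2 : ‖u j‖ ≤ L := hL _ _ _
          have h3 : ‖v j‖ ≤ L := hL _ _ _
          nlinarith
  have hper : ∀ j : Fin m, ‖(a - b) - c • (u j - v j)‖ ≤ ‖a - b‖
      + 2 * L * c * ((if P = i₀ then (1:ℝ) else 0) + (if Q j = i₀ then (1:ℝ) else 0)) := by
    intro j
    by_cases hP : P = i₀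
    · have hχ : (1:ℝ) ≤ (if P = i₀ then (1:ℝ) else 0) + (if Q j = i₀ then (1:ℝ) else 0) := by
        rw [if_pos hP]
        split <;> norm_num
      have h2Lc : 0 ≤ 2 * L * c := by positivity
      nlinarith [hgen j]
    · by_cases hQ : Q j = i₀
      · have hχ : (1:ℝ) ≤ (if P = i₀ then (1:ℝ) else 0) + (if Q j = i₀ then (1:ℝ) else 0) := by
          rw [if_pos hQ, if_neg hP]
          norm_num
        have h2Lc : 0 ≤ 2 * L * c := by positivity
        nlinarith [hgen j]
      · have e1 : S P = S' P := hSS' P hP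
        have e2 : S (Q j) = S' (Q j) := hSS' _ hQ
        have hrw2 : (a - b) - c • (u j - v j) = (a - c • u j) - (b - c • v j) := by module
        have huv : u j = g a (S' P) (S' (Q j)) := by simp only [hu]; rw [e1, e2]
        have hvv : v j = g b (S' P) (S' (Q j)) := by simp only [hv]
        rw [hrw2, huv, hvv, if_neg hP, if_neg hQ]
        have hne := aux_nonexp hβ (hconv (S' P) (S' (Q j)))
          (fun x => hdiff x (S' P) (S' (Q j))) (fun x y => hsmooth (S' P) (S' (Q j)) x y)
          hc hc2 a b
        simpa using hne
  calc ‖(a - (c / (m : ℝ)) • ∑ j : Fin m, u j) - (b - (c / (m : ℝ)) • ∑ j : Fin m, v j)‖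
      = (m:ℝ)⁻¹ * ‖∑ j : Fin m, ((a - b) - c • (u j - v j))‖ := by
        rw [hws, norm_smul, Real.norm_eq_abs, abs_of_nonneg (by positivity : (0:ℝ) ≤ (m:ℝ)⁻¹)]
    _ ≤ (m:ℝ)⁻¹ * ∑ j : Fin m, ‖(a - b) - c • (u j - v j)‖ := by
        gcongr
        exact norm_sum_le _ _
    _ ≤ (m:ℝ)⁻¹ * ∑ j : Fin m, (‖a - b‖
          + 2 * L * c * ((if P = i₀ then (1:ℝ) else 0) + (if Q j = i₀ then (1:ℝ) else 0))) := by
        gcongr with j hj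
        exact hper j
    _ = (m:ℝ)⁻¹ * ((m:ℝ) * ‖a - b‖ + 2 * L * c *
          ∑ j : Fin m, ((if P = i₀ then (1:ℝ) else 0) + (if Q j = i₀ then (1:ℝ) else 0))) := by
        rw [Finset.sum_add_distrib, Finset.sum_const, Finset.card_univ, Fintype.card_fin,
          nsmul_eq_mul, ← Finset.mul_sum]
    _ = ‖a - b‖ + (2 * L * c / (m : ℝ)) *
          ∑ j : Fin m, ((if P = i₀ then (1:ℝ) else 0) + (if Q j = i₀ then (1:ℝ) else 0)) := by
        field_simp

/-- **Theorem 9 (last iterate).** Random uniform stability of pairwise-SGD with convex,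
`β`-smooth, `L`-Lipschitz losses and step sizes `α_t ≤ 2/β`, under the random selection rule:
`E_ξ |ℓ(w_T, z, z') − ℓ(w'_T, z, z')| ≤ (4L²/n)·Σ_{t=1}^{T−1} α_t`. -/
theorem pairwise_sgd_stability_convex_last_iterate
    {Z : Type*} (d : ℕ) (hd : 1 ≤ d) (n T : ℕ) (hn : 2 ≤ n) (hT : 1 ≤ T)
    (ℓ : EuclideanSpace ℝ (Fin d) → Z → Z → ℝ)
    (g : EuclideanSpace ℝ (Fin d) → Z → Z → EuclideanSpace ℝ (Fin d)) (L β : ℝ) (hβ : 0 < β)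
    (hconv : ∀ z z' : Z, ConvexOn ℝ Set.univ fun u => ℓ u z z')
    (hdiff : ∀ (v : EuclideanSpace ℝ (Fin d)) (z z' : Z),
      HasGradientAt (fun u => ℓ u z z') (g v z z') v)
    (hsmooth : ∀ (z z' : Z) (u v : EuclideanSpace ℝ (Fin d)),
      ‖g u z z' - g v z z'‖ ≤ β * ‖u - v‖)
    (hL : ∀ (v : EuclideanSpace ℝ (Fin d)) (z z' : Z), ‖g v z z'‖ ≤ L)
    (S S' : Fin n → Z) (i₀ : Fin n) (hSS' : ∀ i, i ≠ i₀ → S i = S' i)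
    (α : ℕ → ℝ) (hα : ∀ s, 0 ≤ α s) (hα2 : ∀ s, α s ≤ 2 / β)
    (w w' : (Fin T → Fin n) → ℕ → EuclideanSpace ℝ (Fin d))
    (hw1 : ∀ ξ, w ξ 1 = 0) (hw1' : ∀ ξ, w' ξ 1 = 0)
    (hrec : ∀ (ξ : Fin T → Fin n) (s : ℕ) (hs2 : 2 ≤ s) (hsT : s ≤ T),
      w ξ s = w ξ (s - 1) - (α (s - 1) / ((s : ℝ) - 1)) •
        ∑ j : Fin (s - 1), g (w ξ (s - 1)) (S (ξ ⟨s - 1, by omega⟩))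
          (S (ξ ⟨(j : ℕ), lt_of_lt_of_le j.isLt (by omega)⟩)))
    (hrec' : ∀ (ξ : Fin T → Fin n) (s : ℕ) (hs2 : 2 ≤ s) (hsT : s ≤ T),
      w' ξ s = w' ξ (s - 1) - (α (s - 1) / ((s : ℝ) - 1)) •
        ∑ j : Fin (s - 1), g (w' ξ (s - 1)) (S' (ξ ⟨s - 1, by omega⟩))
          (S' (ξ ⟨(j : ℕ), lt_of_lt_of_le j.isLt (by omega)⟩))) :
    ∀ z z' : Z,
      (1 / (n : ℝ) ^ T) * ∑ ξ : Fin T → Fin n, |ℓ (w ξ T) z z' - ℓ (w' ξ T) z z'| ≤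
        (4 * L ^ 2 / (n : ℝ)) * ∑ s ∈ Finset.Icc 1 (T - 1), α s := by
  intro z z'
  classical
  have hL0 : 0 ≤ L := le_trans (norm_nonneg _) (hL 0 z z')
  have hnpos : (0:ℝ) < (n:ℝ) := by exact_mod_cast (by omega : 0 < n)
  -- one-step bound along each path
  have hstep : ∀ (ξ : Fin T → Fin n) (k : ℕ) (hk : 1 ≤ k) (hkT : k + 1 ≤ T),
      ‖w ξ (k+1) - w' ξ (k+1)‖ ≤ ‖w ξ k - w' ξ k‖
        + (2 * L * α k / (k : ℝ)) * ∑ j : Fin k,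
            ((if ξ ⟨k, by omega⟩ = i₀ then (1:ℝ) else 0)
              + (if ξ ⟨(j : ℕ), lt_of_lt_of_le j.isLt (by omega)⟩ = i₀ then (1:ℝ) else 0)) := by
    intro ξ k hk hkT
    have hco : ((k+1:ℕ) : ℝ) - 1 = ((k:ℕ) : ℝ) := by push_cast; ring
    have h1 := hrec ξ (k+1) (by omega) hkT
    have h1' := hrec' ξ (k+1) (by omega) hkT
    rw [hco] at h1 h1'
    rw [h1, h1']
    exact aux_step_bound ℓ g L β hβ hconv hdiff hsmooth hL S S' i₀ hSS'
      (hα k) (hα2 k) hk (ξ ⟨k, by omega⟩)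
      (fun j : Fin k => ξ ⟨(j : ℕ), lt_of_lt_of_le j.isLt (by omega)⟩) (w ξ k) (w' ξ k)
  -- induction on the iterate
  have key : ∀ s : ℕ, 1 ≤ s → s ≤ T →
      ∑ ξ : Fin T → Fin n, ‖w ξ s - w' ξ s‖
        ≤ (n:ℝ) ^ (T-1) * (4 * L * ∑ t ∈ Finset.Icc 1 (s-1), α t) := by
    intro s
    induction s with
    | zero => omega
    | succ k ih =>
      intro _ hsT
      by_cases hk : k = 0
      · subst hk
        have hIcc : Finset.Icc 1 (0+1-1) = (∅ : Finset ℕ) := rfl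
        simp [hw1, hw1', hIcc]
      · have hk1 : 1 ≤ k := Nat.one_le_iff_ne_zero.mpr hk
        have ihk := ih hk1 (by omega)
        have hkne : ((k:ℕ) : ℝ) ≠ 0 := Nat.cast_ne_zero.mpr hk
        have hkpos : (0:ℝ) < (k:ℝ) := by exact_mod_cast Nat.pos_of_ne_zero hk
        have hA : ∑ ξ : Fin T → Fin n, ∑ j : Fin k,
            ((if ξ ⟨k, by omega⟩ = i₀ then (1:ℝ) else 0)
              + (if ξ ⟨(j : ℕ), lt_of_lt_of_le j.isLt (by omega)⟩ = i₀ then (1:ℝ) else 0))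
            = (k:ℝ) * (2 * (n:ℝ) ^ (T-1)) := by
          rw [Finset.sum_comm]
          have hj : ∀ j : Fin k, ∑ ξ : Fin T → Fin n,
              ((if ξ ⟨k, by omega⟩ = i₀ then (1:ℝ) else 0)
                + (if ξ ⟨(j : ℕ), lt_of_lt_of_le j.isLt (by omega)⟩ = i₀ then (1:ℝ) else 0))
              = 2 * (n:ℝ) ^ (T-1) := by
            intro j
            rw [Finset.sum_add_distrib, aux_count n T (by omega) i₀ ⟨k, by omega⟩,
              aux_count n T (by omega) i₀ ⟨(j : ℕ), lt_of_lt_of_le j.isLt (by omega)⟩]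
            ring
          rw [Finset.sum_congr rfl (fun j _ => hj j), Finset.sum_const, Finset.card_univ,
            Fintype.card_fin, nsmul_eq_mul]
        calc ∑ ξ : Fin T → Fin n, ‖w ξ (k+1) - w' ξ (k+1)‖
            ≤ ∑ ξ : Fin T → Fin n, (‖w ξ k - w' ξ k‖
                + (2 * L * α k / (k : ℝ)) * ∑ j : Fin k,
                  ((if ξ ⟨k, by omega⟩ = i₀ then (1:ℝ) else 0)
                    + (if ξ ⟨(j : ℕ), lt_of_lt_of_le j.isLt (by omega)⟩ = i₀
                        then (1:ℝ) else 0))) :=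
              Finset.sum_le_sum (fun ξ _ => hstep ξ k hk1 hsT)
          _ = (∑ ξ : Fin T → Fin n, ‖w ξ k - w' ξ k‖)
                + (2 * L * α k / (k : ℝ)) * ∑ ξ : Fin T → Fin n, ∑ j : Fin k,
                  ((if ξ ⟨k, by omega⟩ = i₀ then (1:ℝ) else 0)
                    + (if ξ ⟨(j : ℕ), lt_of_lt_of_le j.isLt (by omega)⟩ = i₀
                        then (1:ℝ) else 0)) := by
              rw [Finset.sum_add_distrib, Finset.mul_sum]
          _ = (∑ ξ : Fin T → Fin n, ‖w ξ k - w' ξ k‖)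
                + (2 * L * α k / (k : ℝ)) * ((k:ℝ) * (2 * (n:ℝ) ^ (T-1))) := by rw [hA]
          _ ≤ (n:ℝ) ^ (T-1) * (4 * L * ∑ t ∈ Finset.Icc 1 (k-1), α t)
                + 4 * L * α k * (n:ℝ) ^ (T-1) := by
              have h2 : (2 * L * α k / (k:ℝ)) * ((k:ℝ) * (2 * (n:ℝ) ^ (T-1)))
                  = 4 * L * α k * (n:ℝ) ^ (T-1) := by
                field_simp
                ring
              rw [h2]
              linarith [ihk]
          _ = (n:ℝ) ^ (T-1) * (4 * L * ∑ t ∈ Finset.Icc 1 (k+1-1), α t) := by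
              have hsum : ∑ t ∈ Finset.Icc 1 k, α t
                  = (∑ t ∈ Finset.Icc 1 (k-1), α t) + α k := by
                have h2 : k = (k-1)+1 := by omega
                rw [h2]
                rw [Finset.sum_Icc_succ_top (by omega)]
                simp only [Nat.add_sub_cancel]
              simp only [Nat.add_sub_cancel]
              rw [hsum]
              ring
  have hfin := key T hT le_rfl
  have hlip : ∀ ξ : Fin T → Fin n,
      |ℓ (w ξ T) z z' - ℓ (w' ξ T) z z'| ≤ L * ‖w ξ T - w' ξ T‖ :=
    fun ξ => aux_lips (fun v => hdiff v z z') (fun v => hL v z z') _ _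
  have hp : (n:ℝ) ^ T = (n:ℝ) * (n:ℝ) ^ (T-1) := by
    have h2 : T - 1 + 1 = T := by omega
    rw [← h2, Nat.add_sub_cancel, pow_succ]
    ring
  calc (1 / (n : ℝ) ^ T) * ∑ ξ : Fin T → Fin n, |ℓ (w ξ T) z z' - ℓ (w' ξ T) z z'|
      ≤ (1 / (n : ℝ) ^ T) * ∑ ξ : Fin T → Fin n, (L * ‖w ξ T - w' ξ T‖) := by
        gcongr with ξ hξ
        exact hlip ξ
    _ = (1 / (n : ℝ) ^ T) * (L * ∑ ξ : Fin T → Fin n, ‖w ξ T - w' ξ T‖) := by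
        simp only [Finset.mul_sum]
    _ ≤ (1 / (n : ℝ) ^ T) * (L * ((n:ℝ) ^ (T-1) * (4 * L * ∑ t ∈ Finset.Icc 1 (T-1), α t))) := by
        have h1 := mul_le_mul_of_nonneg_left hfin hL0
        exact mul_le_mul_of_nonneg_left h1 (by positivity)
    _ = (4 * L ^ 2 / (n : ℝ)) * ∑ s ∈ Finset.Icc 1 (T - 1), α s := by
        rw [hp]
        have hpow : (0:ℝ) < (n:ℝ) ^ (T-1) := by positivity
        field_simp
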